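/- arXiv:2001.06950 — 2 statements merged into one kernel-verified Lean document; each statement's English description precedes it below -/
import Mathlib

section
/- Let Ω ⊂ ℝⁿ be a bounded measurable set and let (ρₙ) be a sequence of measurable functions on Ω, and P, G : ℝ → ℝ continuous non-decreasing functions. Suppose P(ρₙ) ⇀ p̄, G(ρₙ) ⇀ ḡ and P(ρₙ)G(ρₙ) ⇀ h̄ weakly in L¹(Ω). Then p̄ · ḡ ≤ h̄ almost everywhere in Ω. -/
open MeasureTheory Filter

/-- Weak convergence in `L¹(Ω)`: convergence of integrals against every bounded
measurable test function. -/
def WeakL1TendstoOn {d : ℕ} (Ω : Set (EuclideanSpace ℝ (Fin d)))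
    (f : ℕ → EuclideanSpace ℝ (Fin d) → ℝ) (F : EuclideanSpace ℝ (Fin d) → ℝ) : Prop :=
  ∀ ψ : EuclideanSpace ℝ (Fin d) → ℝ, Measurable ψ → (∃ K : ℝ, ∀ x, |ψ x| ≤ K) →
    Tendsto (fun n => ∫ x in Ω, f n x * ψ x) atTop (nhds (∫ x in Ω, F x * ψ x))

lemma cheb_aux {X : Type*} [MeasurableSpace X] (ν : Measure X) [SigmaFinite ν]
    (f g ψ : X → ℝ) (hψ : ∀ x, 0 ≤ ψ x)
    (hcom : ∀ x y, 0 ≤ (f x - f y) * (g x - g y))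
    (h1 : Integrable (fun x => f x * ψ x) ν) (h2 : Integrable (fun x => g x * ψ x) ν)
    (h3 : Integrable (fun x => f x * g x * ψ x) ν) (h4 : Integrable ψ ν) :
    (∫ x, f x * ψ x ∂ν) * (∫ x, g x * ψ x ∂ν) ≤
      (∫ x, f x * g x * ψ x ∂ν) * (∫ x, ψ x ∂ν) := by
  have key : 0 ≤ ∫ z : X × X, (f z.1 - f z.2) * (g z.1 - g z.2) * (ψ z.1 * ψ z.2) ∂(ν.prod ν) :=
    integral_nonneg fun z => mul_nonneg (hcom _ _) (mul_nonneg (hψ _) (hψ _))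
  have hfun : (fun z : X × X => (f z.1 - f z.2) * (g z.1 - g z.2) * (ψ z.1 * ψ z.2)) =
      fun z : X × X => ((f z.1 * g z.1 * ψ z.1) * ψ z.2 + ψ z.1 * (f z.2 * g z.2 * ψ z.2)) -
        ((f z.1 * ψ z.1) * (g z.2 * ψ z.2) + (g z.1 * ψ z.1) * (f z.2 * ψ z.2)) := by
    funext z; ring
  have iA : Integrable (fun z : X × X => (f z.1 * g z.1 * ψ z.1) * ψ z.2) (ν.prod ν) :=
    h3.mul_prod h4
  have iD : Integrable (fun z : X × X => ψ z.1 * (f z.2 * g z.2 * ψ z.2)) (ν.prod ν) :=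
    h4.mul_prod h3
  have iB : Integrable (fun z : X × X => (f z.1 * ψ z.1) * (g z.2 * ψ z.2)) (ν.prod ν) :=
    h1.mul_prod h2
  have iC : Integrable (fun z : X × X => (g z.1 * ψ z.1) * (f z.2 * ψ z.2)) (ν.prod ν) :=
    h2.mul_prod h1
  have expand := integral_sub (iA.add iD) (iB.add iC)
  simp only [Pi.add_apply] at expand
  rw [hfun, expand, integral_add iA iD, integral_add iB iC] at key
  rw [integral_prod_mul (fun x => f x * g x * ψ x) ψ,
    integral_prod_mul ψ (fun x => f x * g x * ψ x),
    integral_prod_mul (fun x => f x * ψ x) (fun x => g x * ψ x),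
    integral_prod_mul (fun x => g x * ψ x) (fun x => f x * ψ x)] at key
  linarith

theorem weak_limit_product_of_monotone_ge
    {d : ℕ} (Ω : Set (EuclideanSpace ℝ (Fin d))) (hΩm : MeasurableSet Ω)
    (hΩb : Bornology.IsBounded Ω)
    (P G : ℝ → ℝ) (hPc : Continuous P) (hPm : Monotone P)
    (hGc : Continuous G) (hGm : Monotone G)
    (ρ : ℕ → EuclideanSpace ℝ (Fin d) → ℝ) (hρ : ∀ n, Measurable (ρ n))
    (pbar gbar hbar : EuclideanSpace ℝ (Fin d) → ℝ)
    (hP1 : ∀ n, IntegrableOn (fun x => P (ρ n x)) Ω volume)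
    (hG1 : ∀ n, IntegrableOn (fun x => G (ρ n x)) Ω volume)
    (hPG1 : ∀ n, IntegrableOn (fun x => P (ρ n x) * G (ρ n x)) Ω volume)
    (hp1 : IntegrableOn pbar Ω volume) (hg1 : IntegrableOn gbar Ω volume)
    (hh1 : IntegrableOn hbar Ω volume)
    (hPw : WeakL1TendstoOn Ω (fun n x => P (ρ n x)) pbar)
    (hGw : WeakL1TendstoOn Ω (fun n x => G (ρ n x)) gbar)
    (hPGw : WeakL1TendstoOn Ω (fun n x => P (ρ n x) * G (ρ n x)) hbar) :
    ∀ᵐ x ∂(volume.restrict Ω), pbar x * gbar x ≤ hbar x := by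
  have hμΩ : volume Ω < ⊤ := hΩb.measure_lt_top
  haveI : IsFiniteMeasure (volume.restrict Ω) :=
    ⟨by rwa [Measure.restrict_apply_univ]⟩
  -- Step 1: the tested inequality for every nonnegative bounded measurable ψ
  have key : ∀ ψ : EuclideanSpace ℝ (Fin d) → ℝ, Measurable ψ → (∀ x, 0 ≤ ψ x) →
      (∃ K : ℝ, ∀ x, |ψ x| ≤ K) →
      (∫ x in Ω, pbar x * ψ x) * (∫ x in Ω, gbar x * ψ x) ≤
        (∫ x in Ω, hbar x * ψ x) * (∫ x in Ω, ψ x) := by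
    intro ψ hψm hψ0 hψb
    obtain ⟨K, hK⟩ := hψb
    have hbd : ∃ C, ∀ x, ‖ψ x‖ ≤ C := ⟨K, fun x => by rw [Real.norm_eq_abs]; exact hK x⟩
    have iψ : Integrable ψ (volume.restrict Ω) := by
      refine (integrable_const K).mono' hψm.aestronglyMeasurable ?_
      exact ae_of_all _ fun x => by rw [Real.norm_eq_abs]; exact hK x
    have mulint : ∀ (F : EuclideanSpace ℝ (Fin d) → ℝ), IntegrableOn F Ω volume →
        Integrable (fun x => F x * ψ x) (volume.restrict Ω) := by
      intro F hF
      have := hF.bdd_mul hψm.aestronglyMeasurable (ae_of_all _ hbd.choose_spec)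
      exact this.congr (ae_of_all _ fun x => mul_comm _ _)
    have step : ∀ n,
        (∫ x in Ω, P (ρ n x) * ψ x) * (∫ x in Ω, G (ρ n x) * ψ x) ≤
          (∫ x in Ω, P (ρ n x) * G (ρ n x) * ψ x) * (∫ x in Ω, ψ x) := by
      intro n
      refine cheb_aux (volume.restrict Ω) (fun x => P (ρ n x)) (fun x => G (ρ n x)) ψ hψ0
        ?_ (mulint _ (hP1 n)) (mulint _ (hG1 n)) (mulint _ (hPG1 n)) iψ
      intro x y
      rcases le_total (ρ n x) (ρ n y) with h | h
      · nlinarith [sub_nonpos.2 (hPm h), sub_nonpos.2 (hGm h),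
          mul_nonneg (neg_nonneg.2 (sub_nonpos.2 (hPm h))) (neg_nonneg.2 (sub_nonpos.2 (hGm h)))]
      · exact mul_nonneg (sub_nonneg.2 (hPm h)) (sub_nonneg.2 (hGm h))
    have ta := hPw ψ hψm ⟨K, hK⟩
    have tb := hGw ψ hψm ⟨K, hK⟩
    have tc := hPGw ψ hψm ⟨K, hK⟩
    exact le_of_tendsto_of_tendsto' (ta.mul tb) (tc.mul tendsto_const_nhds) step
  -- Step 2: localization via the Lebesgue differentiation theorem
  set p' := Ω.indicator pbar with hp'
  set g' := Ω.indicator gbar with hg'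
  set h' := Ω.indicator hbar with hh'
  set χ := Ω.indicator (fun _ => (1 : ℝ)) with hχ
  have ip' : Integrable p' volume := (integrable_indicator_iff hΩm).2 hp1
  have ig' : Integrable g' volume := (integrable_indicator_iff hΩm).2 hg1
  have ih' : Integrable h' volume := (integrable_indicator_iff hΩm).2 hh1
  have iχ : Integrable χ volume := (integrable_indicator_iff hΩm).2
    (integrableOn_const hμΩ.ne)
  have A := IsUnifLocDoublingMeasure.ae_tendsto_average (μ := (volume : Measure (EuclideanSpace ℝ (Fin d)))) ip'.locallyIntegrable 1
  have B := IsUnifLocDoublingMeasure.ae_tendsto_average (μ := (volume : Measure (EuclideanSpace ℝ (Fin d)))) ig'.locallyIntegrable 1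
  have C := IsUnifLocDoublingMeasure.ae_tendsto_average (μ := (volume : Measure (EuclideanSpace ℝ (Fin d)))) ih'.locallyIntegrable 1
  have D := IsUnifLocDoublingMeasure.ae_tendsto_average (μ := (volume : Measure (EuclideanSpace ℝ (Fin d)))) iχ.locallyIntegrable 1
  have main : ∀ᵐ x ∂(volume : Measure (EuclideanSpace ℝ (Fin d))),
      p' x * g' x ≤ h' x * χ x := by
    filter_upwards [A, B, C, D] with x hA hB hC hD
    have hev : ∀ᶠ r in nhdsWithin (0:ℝ) (Set.Ioi 0), x ∈ Metric.closedBall x (1 * r) := by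
      filter_upwards [self_mem_nhdsWithin] with r hr
      have : (0:ℝ) ≤ 1 * r := by simpa using le_of_lt hr
      exact Metric.mem_closedBall_self this
    have tA := hA (fun _ => x) (fun r => r) tendsto_id hev
    have tB := hB (fun _ => x) (fun r => r) tendsto_id hev
    have tC := hC (fun _ => x) (fun r => r) tendsto_id hev
    have tD := hD (fun _ => x) (fun r => r) tendsto_id hev
    refine le_of_tendsto_of_tendsto (tA.mul tB) (tC.mul tD) ?_
    filter_upwards [self_mem_nhdsWithin] with r hr
    set Bx := Metric.closedBall x r with hBx
    have hBxm : MeasurableSet Bx := measurableSet_closedBall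
    have hψm : Measurable (Bx.indicator fun _ => (1:ℝ)) :=
      measurable_const.indicator hBxm
    have hψ0 : ∀ z, 0 ≤ Bx.indicator (fun _ => (1:ℝ)) z := fun z =>
      Set.indicator_nonneg (fun _ _ => zero_le_one) z
    have hψb : ∃ K : ℝ, ∀ z, |Bx.indicator (fun _ => (1:ℝ)) z| ≤ K := by
      refine ⟨1, fun z => ?_⟩
      by_cases h : z ∈ Bx <;> simp [Set.indicator_of_mem, Set.indicator_of_notMem, h]
    have hKey := key _ hψm hψ0 hψb
    -- rewrite the four integrals
    have comm : ∀ (F : EuclideanSpace ℝ (Fin d) → ℝ),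
        (∫ z in Ω, F z * Bx.indicator (fun _ => (1:ℝ)) z) = ∫ z in Bx, Ω.indicator F z := by
      intro F
      have e : (fun z => F z * Bx.indicator (fun _ => (1:ℝ)) z) =
          fun z => Bx.indicator F z := by
        funext z
        by_cases h : z ∈ Bx <;>
          simp [Set.indicator_of_mem, Set.indicator_of_notMem, h]
      rw [e, setIntegral_indicator hBxm, setIntegral_indicator hΩm, Set.inter_comm]
    have e4 : (∫ z in Ω, Bx.indicator (fun _ => (1:ℝ)) z) = ∫ z in Bx, χ z := by
      have := comm (fun _ => (1:ℝ))
      simpa [one_mul] using this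
    rw [comm pbar, comm gbar, comm hbar, e4] at hKey
    -- pass to averages
    rw [setAverage_eq, setAverage_eq, setAverage_eq, setAverage_eq]
    set c := (volume Bx).toReal⁻¹ with hc
    have hc0 : 0 ≤ c := inv_nonneg.2 ENNReal.toReal_nonneg
    simp only [smul_eq_mul]
    calc (c * ∫ z in Bx, p' z) * (c * ∫ z in Bx, g' z)
        = (c * c) * ((∫ z in Bx, Ω.indicator pbar z) * (∫ z in Bx, Ω.indicator gbar z)) := by
          rw [hp', hg']; ring
      _ ≤ (c * c) * ((∫ z in Bx, Ω.indicator hbar z) * (∫ z in Bx, χ z)) :=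
          mul_le_mul_of_nonneg_left hKey (mul_nonneg hc0 hc0)
      _ = (c * ∫ z in Bx, h' z) * (c * ∫ z in Bx, χ z) := by rw [hh']; ring
  filter_upwards [ae_restrict_mem hΩm, ae_restrict_of_ae main] with x hx hineq
  rw [hp', hg', hh', hχ] at hineq
  simpa [Set.indicator_of_mem hx] using hineq
end

section
/- Let Ω ⊂ ℝⁿ be a bounded measurable set, P : ℝ → ℝ continuous and non-decreasing, and (ρₙ) a sequence of measurable functions with ρₙ ⇀ ρ, P(ρₙ) ⇀ p̄ and P(ρₙ)ρₙ ⇀ p̄·ρ weakly in L¹(Ω) (i.e., the weak limit of the products equals the product of the weak limits). Then p̄ = P(ρ) almost everywhere in Ω. -/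
open MeasureTheory Filter

/-- Pointwise identification: if `(b - P q)(r - q) ≥ 0` for all rationals `q`,
then `b = P r` by continuity of `P`. -/
lemma pointwise_identify (P : ℝ → ℝ) (hPc : Continuous P) (r b : ℝ)
    (h : ∀ q : ℚ, 0 ≤ (b - P q) * (r - q)) : b = P r := by
  rcases lt_trichotomy b (P r) with hlt | heq | hgt
  · -- pick rational q slightly below r with P q > b
    exfalso
    have hU : IsOpen (P ⁻¹' Set.Ioi b) := (isOpen_Ioi).preimage hPc
    have hrU : r ∈ P ⁻¹' Set.Ioi b := hlt
    obtain ⟨ε, hε, hball⟩ := Metric.isOpen_iff.1 hU r hrU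
    obtain ⟨q, hq1, hq2⟩ := exists_rat_btwn (show r - ε < r by linarith)
    have hqU : (q : ℝ) ∈ P ⁻¹' Set.Ioi b := by
      apply hball
      rw [Metric.mem_ball, Real.dist_eq, abs_lt]
      constructor <;> linarith
    have h1 : (0:ℝ) < P q - b := by
      have := Set.mem_preimage.1 hqU
      simp only [Set.mem_Ioi] at this; linarith
    have h2 : (0:ℝ) < r - q := by linarith
    have := h q
    nlinarith
  · exact heq
  · exfalso
    have hU : IsOpen (P ⁻¹' Set.Iio b) := (isOpen_Iio).preimage hPc
    have hrU : r ∈ P ⁻¹' Set.Iio b := hgt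
    obtain ⟨ε, hε, hball⟩ := Metric.isOpen_iff.1 hU r hrU
    obtain ⟨q, hq1, hq2⟩ := exists_rat_btwn (show r < r + ε by linarith)
    have hqU : (q : ℝ) ∈ P ⁻¹' Set.Iio b := by
      apply hball
      rw [Metric.mem_ball, Real.dist_eq, abs_lt]
      constructor <;> linarith
    have h1 : (0:ℝ) < b - P q := by
      have := Set.mem_preimage.1 hqU
      simp only [Set.mem_Iio] at this; linarith
    have h2 : (0:ℝ) < q - r := by linarith
    have := h q
    nlinarith

theorem weak_limit_of_monotone_identifies
    {d : ℕ} (Ω : Set (EuclideanSpace ℝ (Fin d))) (hΩm : MeasurableSet Ω)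
    (hΩb : Bornology.IsBounded Ω)
    (P : ℝ → ℝ) (hPc : Continuous P) (hPm : Monotone P)
    (ρn : ℕ → EuclideanSpace ℝ (Fin d) → ℝ) (hρn : ∀ n, Measurable (ρn n))
    (ρ pbar : EuclideanSpace ℝ (Fin d) → ℝ)
    (hρ1 : ∀ n, IntegrableOn (ρn n) Ω volume)
    (hP1 : ∀ n, IntegrableOn (fun x => P (ρn n x)) Ω volume)
    (hPρ1 : ∀ n, IntegrableOn (fun x => P (ρn n x) * ρn n x) Ω volume)
    (hρlim : IntegrableOn ρ Ω volume) (hplim : IntegrableOn pbar Ω volume)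
    (hprodlim : IntegrableOn (fun x => pbar x * ρ x) Ω volume)
    (hρw : WeakL1TendstoOn Ω ρn ρ)
    (hPw : WeakL1TendstoOn Ω (fun n x => P (ρn n x)) pbar)
    (hPρw : WeakL1TendstoOn Ω (fun n x => P (ρn n x) * ρn n x) (fun x => pbar x * ρ x)) :
    ∀ᵐ x ∂(volume.restrict Ω), pbar x = P (ρ x) := by
  have hΩfin : volume Ω < ⊤ := hΩb.measure_lt_top
  have hμfin : IsFiniteMeasure (volume.restrict Ω) := by
    constructor
    rw [Measure.restrict_apply_univ]
    exact hΩfin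
  -- Step 1: for each rational q, the Minty-type inequality holds a.e.
  have key : ∀ q : ℚ, ∀ᵐ x ∂(volume.restrict Ω), 0 ≤ (pbar x - P q) * (ρ x - q) := by
    intro q
    have hint : Integrable (fun x => (pbar x - P q) * (ρ x - q)) (volume.restrict Ω) := by
      have h1 : Integrable (fun x => pbar x * ρ x) (volume.restrict Ω) := hprodlim
      have h2 : Integrable (fun x => pbar x * q) (volume.restrict Ω) := hplim.mul_const _
      have h3 : Integrable (fun x => P q * ρ x) (volume.restrict Ω) := hρlim.const_mul _
      have h4 : Integrable (fun _ : EuclideanSpace ℝ (Fin d) => P q * (q : ℝ))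
          (volume.restrict Ω) := integrable_const _
      have := ((h1.sub h2).sub h3).add h4
      refine this.congr (Filter.Eventually.of_forall fun x => ?_)
      simp only [Pi.add_apply, Pi.sub_apply, Pi.neg_apply]
      ring
    refine ae_nonneg_of_forall_setIntegral_nonneg hint fun s hs _ => ?_
    -- test function: indicator of s
    set ψ : EuclideanSpace ℝ (Fin d) → ℝ := s.indicator (fun _ => 1) with hψ
    have hψm : Measurable ψ := measurable_const.indicator hs
    have hψnn : ∀ x, 0 ≤ ψ x := fun x => by
      rw [hψ]; by_cases hx : x ∈ s <;> simp [Set.indicator_apply, hx]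
    have hψle : ∀ x, ψ x ≤ 1 := fun x => by
      rw [hψ]; by_cases hx : x ∈ s <;> simp [Set.indicator_apply, hx]
    have hψb' : ∀ x, ‖ψ x‖ ≤ 1 := fun x => by
      rw [Real.norm_eq_abs, abs_le]; exact ⟨by linarith [hψnn x], hψle x⟩
    have hψb : ∃ K : ℝ, ∀ x, |ψ x| ≤ K := ⟨1, fun x => by
      simpa [Real.norm_eq_abs] using hψb' x⟩
    -- multiplication by ψ preserves integrability
    have int_psi : ∀ g : EuclideanSpace ℝ (Fin d) → ℝ,
        Integrable g (volume.restrict Ω) →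
        Integrable (fun x => g x * ψ x) (volume.restrict Ω) := fun g hg =>
      (hg.bdd_mul (c := 1) hψm.aestronglyMeasurable (Filter.Eventually.of_forall hψb')).congr
        (Filter.Eventually.of_forall fun x => mul_comm _ _)
    -- auxiliary test functions
    have hψm1 : Measurable (fun x => (q : ℝ) * ψ x) := hψm.const_mul _
    have hψb1 : ∃ K : ℝ, ∀ x, |(q : ℝ) * ψ x| ≤ K := by
      refine ⟨|(q : ℝ)|, fun x => ?_⟩
      rw [abs_mul]
      calc |(q:ℝ)| * |ψ x| ≤ |(q:ℝ)| * 1 :=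
            mul_le_mul_of_nonneg_left (by simpa [Real.norm_eq_abs] using hψb' x)
              (abs_nonneg _)
        _ = |(q:ℝ)| := mul_one _
    have hψm2 : Measurable (fun x => P q * ψ x) := hψm.const_mul _
    have hψb2 : ∃ K : ℝ, ∀ x, |P q * ψ x| ≤ K := by
      refine ⟨|P q|, fun x => ?_⟩
      rw [abs_mul]
      calc |P q| * |ψ x| ≤ |P q| * 1 :=
            mul_le_mul_of_nonneg_left (by simpa [Real.norm_eq_abs] using hψb' x)
              (abs_nonneg _)
        _ = |P q| := mul_one _
    -- the weak convergences against these test functions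
    have hA := hPρw ψ hψm hψb
    have hB := hPw (fun x => (q : ℝ) * ψ x) hψm1 hψb1
    have hC := hρw (fun x => P q * ψ x) hψm2 hψb2
    -- integrability of the pieces, for each n
    have intA : ∀ n, Integrable (fun x => P (ρn n x) * ρn n x * ψ x)
        (volume.restrict Ω) := fun n => int_psi _ (hPρ1 n)
    have intB : ∀ n, Integrable (fun x => P (ρn n x) * ((q : ℝ) * ψ x))
        (volume.restrict Ω) := fun n =>
      (int_psi _ ((hP1 n).mul_const (q : ℝ))).congr
        (Filter.Eventually.of_forall fun x => by ring)
    have intC : ∀ n, Integrable (fun x => ρn n x * (P q * ψ x))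
        (volume.restrict Ω) := fun n =>
      (int_psi _ ((hρ1 n).mul_const (P q))).congr
        (Filter.Eventually.of_forall fun x => by ring)
    have intD : Integrable (fun x : EuclideanSpace ℝ (Fin d) => P q * (q : ℝ) * ψ x)
        (volume.restrict Ω) := int_psi _ (integrable_const _)
    -- splitting identity for each n
    have hsplit : ∀ n, (∫ x in Ω, (P (ρn n x) - P q) * (ρn n x - q) * ψ x) =
        (∫ x in Ω, P (ρn n x) * ρn n x * ψ x) -
        (∫ x in Ω, P (ρn n x) * ((q : ℝ) * ψ x)) -
        (∫ x in Ω, ρn n x * (P q * ψ x)) +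
        (∫ x in Ω, P q * (q : ℝ) * ψ x) := by
      intro n
      have heq : (fun x => (P (ρn n x) - P q) * (ρn n x - q) * ψ x) =
          fun x => P (ρn n x) * ρn n x * ψ x - P (ρn n x) * ((q : ℝ) * ψ x) -
            ρn n x * (P q * ψ x) + P q * (q : ℝ) * ψ x := funext fun x => by ring
      have iAB : Integrable (fun x => P (ρn n x) * ρn n x * ψ x -
          P (ρn n x) * ((q : ℝ) * ψ x)) (volume.restrict Ω) := (intA n).sub (intB n)
      have iABC : Integrable (fun x => P (ρn n x) * ρn n x * ψ x -
          P (ρn n x) * ((q : ℝ) * ψ x) - ρn n x * (P q * ψ x)) (volume.restrict Ω) :=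
        iAB.sub (intC n)
      rw [heq, integral_add iABC intD, integral_sub iAB (intC n),
        integral_sub (intA n) (intB n)]
    -- splitting identity for the limit
    have intA' : Integrable (fun x => pbar x * ρ x * ψ x) (volume.restrict Ω) :=
      int_psi _ hprodlim
    have intB' : Integrable (fun x => pbar x * ((q : ℝ) * ψ x)) (volume.restrict Ω) :=
      (int_psi _ (hplim.mul_const (q : ℝ))).congr
        (Filter.Eventually.of_forall fun x => by ring)
    have intC' : Integrable (fun x => ρ x * (P q * ψ x)) (volume.restrict Ω) :=
      (int_psi _ (hρlim.mul_const (P q))).congr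
        (Filter.Eventually.of_forall fun x => by ring)
    have hsplit' : (∫ x in Ω, (pbar x - P q) * (ρ x - q) * ψ x) =
        (∫ x in Ω, pbar x * ρ x * ψ x) -
        (∫ x in Ω, pbar x * ((q : ℝ) * ψ x)) -
        (∫ x in Ω, ρ x * (P q * ψ x)) +
        (∫ x in Ω, P q * (q : ℝ) * ψ x) := by
      have heq : (fun x => (pbar x - P q) * (ρ x - q) * ψ x) =
          fun x => pbar x * ρ x * ψ x - pbar x * ((q : ℝ) * ψ x) -
            ρ x * (P q * ψ x) + P q * (q : ℝ) * ψ x := funext fun x => by ring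
      have iAB' : Integrable (fun x => pbar x * ρ x * ψ x -
          pbar x * ((q : ℝ) * ψ x)) (volume.restrict Ω) := intA'.sub intB'
      have iABC' : Integrable (fun x => pbar x * ρ x * ψ x -
          pbar x * ((q : ℝ) * ψ x) - ρ x * (P q * ψ x)) (volume.restrict Ω) :=
        iAB'.sub intC'
      rw [heq, integral_add iABC' intD, integral_sub iAB' intC',
        integral_sub intA' intB']
    -- convergence of the full expression
    have hT : Tendsto (fun n => ∫ x in Ω, (P (ρn n x) - P q) * (ρn n x - q) * ψ x)
        atTop (nhds (∫ x in Ω, (pbar x - P q) * (ρ x - q) * ψ x)) := by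
      rw [hsplit']
      simp only [hsplit]
      exact ((hA.sub hB).sub hC).add tendsto_const_nhds
    -- nonnegativity of each term by monotonicity
    have hnn : ∀ n, 0 ≤ ∫ x in Ω, (P (ρn n x) - P q) * (ρn n x - q) * ψ x := by
      intro n
      refine integral_nonneg fun x => ?_
      have hmono : 0 ≤ (P (ρn n x) - P q) * (ρn n x - q) := by
        rcases le_total (ρn n x) (q : ℝ) with h | h
        · nlinarith [hPm h]
        · exact mul_nonneg (by linarith [hPm h]) (by linarith)
      exact mul_nonneg hmono (hψnn x)
    have hlim_nonneg : 0 ≤ ∫ x in Ω, (pbar x - P q) * (ρ x - q) * ψ x :=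
      ge_of_tendsto' hT hnn
    -- identify the set integral with the ψ-weighted integral
    have hind : (∫ x in Ω, (pbar x - P q) * (ρ x - q) * ψ x) =
        ∫ x in s, (pbar x - P q) * (ρ x - q) ∂(volume.restrict Ω) := by
      rw [Measure.restrict_restrict hs, Set.inter_comm]
      rw [← setIntegral_indicator hs]
      refine integral_congr_ae (Filter.Eventually.of_forall fun x => ?_)
      by_cases hx : x ∈ s <;>
        simp [hψ, Set.indicator_of_mem, Set.indicator_of_notMem, hx]
    rw [← hind]
    exact hlim_nonneg
  -- Step 2: combine over all rationals and conclude pointwise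
  have hall : ∀ᵐ x ∂(volume.restrict Ω), ∀ q : ℚ, 0 ≤ (pbar x - P q) * (ρ x - q) :=
    (ae_all_iff).2 key
  filter_upwards [hall] with x hx
  exact pointwise_identify P hPc (ρ x) (pbar x) hx
end
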